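/- For integers c and c', the pointwise product map f ⊗ g ↦ fg induces an isomorphism of Hilbert C(𝕋²)-bimodules M^c ⊗_{C(𝕋²)} M^{c'} ≅ M^{c+c'}, where M^c = {f ∈ C_b(ℝ × 𝕋) : f(x+1,y) = e^{2πicy} f(x,y)}. -/

import Mathlib

open TensorProduct

set_option synthInstance.maxHeartbeats 1000000
set_option maxHeartbeats 1000000

/-- `e(t) = exp(2πit)`. -/
noncomputable def e (t : ℝ) : ℂ := Complex.exp (2 * Real.pi * Complex.I * t)

/-- `M^c`: bounded continuous functions on `ℝ × 𝕋` with `f(x+1,y) = e(cy) f(x,y)`. -/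
noncomputable def Mc (c : ℤ) : Submodule ℂ ((ℝ × ℝ) → ℂ) where
  carrier := {f | Continuous f ∧ (∃ C, ∀ p, ‖f p‖ ≤ C) ∧
    (∀ x y : ℝ, f (x, y + 1) = f (x, y)) ∧
    (∀ x y : ℝ, f (x + 1, y) = e (c * y) * f (x, y))}
  add_mem' := by
    rintro f g ⟨hfc, ⟨Cf, hCf⟩, hfy, hfx⟩ ⟨hgc, ⟨Cg, hCg⟩, hgy, hgx⟩
    refine ⟨hfc.add hgc, ⟨Cf + Cg, fun p => ?_⟩, fun x y => ?_, fun x y => ?_⟩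
    · exact (norm_add_le _ _).trans (add_le_add (hCf p) (hCg p))
    · simp only [Pi.add_apply, hfy x y, hgy x y]
    · simp only [Pi.add_apply, hfx x y, hgx x y]; ring
  zero_mem' := ⟨continuous_const, ⟨0, by simp⟩, by simp, by simp⟩
  smul_mem' := by
    rintro a f ⟨hfc, ⟨Cf, hCf⟩, hfy, hfx⟩
    refine ⟨hfc.const_smul a, ⟨‖a‖ * Cf, fun p => ?_⟩, fun x y => ?_, fun x y => ?_⟩
    · rw [Pi.smul_apply, norm_smul]
      exact mul_le_mul_of_nonneg_left (hCf p) (norm_nonneg a)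
    · simp only [Pi.smul_apply, hfy x y]
    · simp only [Pi.smul_apply, hfx x y, smul_eq_mul]; ring


lemma e_add (s t : ℝ) : e (s + t) = e s * e t := by
  simp [e, ← Complex.exp_add]; ring_nf

lemma e_int (n : ℤ) : e n = 1 := by
  simp only [e]
  rw [show 2 * (Real.pi:ℂ) * Complex.I * ((n:ℝ):ℂ) = (n:ℂ) * (2 * Real.pi * Complex.I) by push_cast; ring]
  exact Complex.exp_int_mul_two_pi_mul_I n

lemma e_norm (t : ℝ) : ‖e t‖ = 1 := by
  show ‖_‖ = 1
  rw [e, show 2 * (Real.pi:ℂ) * Complex.I * t = ((2 * Real.pi * t : ℝ):ℂ) * Complex.I by push_cast; ring]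
  exact Complex.norm_exp_ofReal_mul_I _

lemma e_mul_e_neg (t : ℝ) : e t * e (-t) = 1 := by
  rw [← e_add, show t + -t = ((0:ℤ):ℝ) by push_cast; ring, e_int]

lemma e_continuous : Continuous e :=
  Complex.continuous_exp.comp (continuous_const.mul Complex.continuous_ofReal)

lemma mem_Mc_iff {c : ℤ} {f : (ℝ × ℝ) → ℂ} : f ∈ Mc c ↔
    (Continuous f ∧ (∃ C, ∀ p, ‖f p‖ ≤ C) ∧
    (∀ x y : ℝ, f (x, y + 1) = f (x, y)) ∧
    (∀ x y : ℝ, f (x + 1, y) = e (c * y) * f (x, y))) := Iff.rfl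

lemma mul_mem_Mc {a b d : ℤ} (hd : a + b = d) {f g : (ℝ × ℝ) → ℂ}
    (hf : f ∈ Mc a) (hg : g ∈ Mc b) : f * g ∈ Mc d := by
  subst hd
  obtain ⟨hfc, ⟨Cf, hCf⟩, hfy, hfx⟩ := hf
  obtain ⟨hgc, ⟨Cg, hCg⟩, hgy, hgx⟩ := hg
  have hCf0 : (0:ℝ) ≤ Cf := le_trans (norm_nonneg _) (hCf (0,0))
  refine ⟨hfc.mul hgc, ⟨Cf * Cg, fun p => ?_⟩, fun x y => ?_, fun x y => ?_⟩
  · rw [Pi.mul_apply, norm_mul]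
    exact mul_le_mul (hCf p) (hCg p) (norm_nonneg _) hCf0
  · simp only [Pi.mul_apply, hfy x y, hgy x y]
  · simp only [Pi.mul_apply, hfx x y, hgx x y]
    rw [show ((a + b : ℤ):ℝ) * y = a * y + b * y by push_cast; ring, e_add]
    ring

lemma cont_aux (u : ℝ → ℝ) (hu : Continuous u) (N : ℝ → ℤ)
    (hN : ∀ x : ℝ, u x ≠ 0 → ∀ᶠ x' in nhds x, N x' = N x) (a : ℤ) :
    Continuous (fun p : ℝ × ℝ => (u p.1 : ℂ) * e ((a * N p.1 : ℤ) * p.2)) := by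
  rw [continuous_iff_continuousAt]
  intro p
  by_cases h : u p.1 = 0
  · have hT : Filter.Tendsto (fun q : ℝ × ℝ => (u q.1 : ℂ) * e ((a * N q.1 : ℤ) * q.2))
        (nhds p) (nhds 0) := by
      apply squeeze_zero_norm (a := fun q : ℝ × ℝ => |u q.1|)
      · intro q
        rw [norm_mul, e_norm, mul_one, Complex.norm_real, Real.norm_eq_abs]
      · have h2 : Filter.Tendsto (fun q : ℝ × ℝ => |u q.1|) (nhds p) (nhds (|u p.1|)) :=
          ((hu.abs.comp continuous_fst).continuousAt)
        rwa [h, abs_zero] at h2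
    unfold ContinuousAt
    simpa [h] using hT
  · have hev : ∀ᶠ q : ℝ × ℝ in nhds p, N q.1 = N p.1 :=
      (Filter.Tendsto.eventually (continuousAt_fst : ContinuousAt Prod.fst p) (hN p.1 h))
    have hc : ContinuousAt (fun q : ℝ × ℝ => (u q.1 : ℂ) * e ((a * N p.1 : ℤ) * q.2)) p := by
      apply ContinuousAt.mul
      · exact (Complex.continuous_ofReal.comp (hu.comp continuous_fst)).continuousAt
      · exact (e_continuous.comp (continuous_const.mul continuous_snd)).continuousAt
    apply hc.congr
    filter_upwards [hev] with q hq
    rw [hq]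

lemma sin_int_pi (n : ℤ) : Real.sin (Real.pi * n) = 0 := by
  rw [show Real.pi * (n:ℝ) = (n:ℤ) * Real.pi by ring]
  exact Real.sin_int_mul_pi n

lemma round_eventually_eq {x : ℝ} (hx : Real.cos (Real.pi * x) ≠ 0) :
    ∀ᶠ x' in nhds x, round x' = round x := by
  set n : ℤ := round x with hn
  have h1 : (n:ℝ) ≤ x + 1/2 ∧ x + 1/2 < (n:ℝ) + 1 := by
    rw [hn, round_eq]
    exact ⟨Int.floor_le _, Int.lt_floor_add_one _⟩
  have hne : x ≠ (n:ℝ) - 1/2 := by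
    intro hxe
    apply hx
    rw [hxe, show Real.pi * ((n:ℝ) - 1/2) = Real.pi * n - Real.pi/2 by ring,
      Real.cos_sub, Real.cos_pi_div_two, Real.sin_pi_div_two, sin_int_pi]
    ring
  have hio : x ∈ Set.Ioo ((n:ℝ) - 1/2) ((n:ℝ) + 1/2) := by
    constructor
    · rcases eq_or_lt_of_le (by linarith [h1.1] : (n:ℝ) - 1/2 ≤ x) with h | h
      · exact absurd h.symm hne
      · exact h
    · linarith [h1.2]
  filter_upwards [Ioo_mem_nhds hio.1 hio.2] with x' hx'
  rw [round_eq, Int.floor_eq_iff]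
  constructor
  · linarith [hx'.1]
  · linarith [hx'.2]

lemma floor_eventually_eq {x : ℝ} (hx : Real.sin (Real.pi * x) ≠ 0) :
    ∀ᶠ x' in nhds x, ⌊x'⌋ = ⌊x⌋ := by
  set n : ℤ := ⌊x⌋ with hn
  have h1 : (n:ℝ) ≤ x ∧ x < (n:ℝ) + 1 := ⟨Int.floor_le _, Int.lt_floor_add_one _⟩
  have hne : x ≠ (n:ℝ) := by
    intro hxe; exact hx (by rw [hxe]; exact sin_int_pi n)
  have hio : x ∈ Set.Ioo ((n:ℝ)) ((n:ℝ) + 1) := by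
    constructor
    · rcases eq_or_lt_of_le h1.1 with h | h
      · exact absurd h.symm hne
      · exact h
    · exact h1.2
  filter_upwards [Ioo_mem_nhds hio.1 hio.2] with x' hx'
  rw [Int.floor_eq_iff]
  exact ⟨le_of_lt hx'.1, by linarith [hx'.2]⟩

noncomputable def F1 (c : ℤ) : (ℝ × ℝ) → ℂ :=
  fun p => ((|Real.cos (Real.pi * p.1)| : ℝ) : ℂ) * e ((c * round p.1 : ℤ) * p.2)

noncomputable def F2 (c : ℤ) : (ℝ × ℝ) → ℂ :=
  fun p => ((|Real.sin (Real.pi * p.1)| : ℝ) : ℂ) * e ((c * ⌊p.1⌋ : ℤ) * p.2)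

lemma F1_mem (c : ℤ) : F1 c ∈ Mc c := by
  rw [mem_Mc_iff]
  refine ⟨?_, ⟨1, fun p => ?_⟩, fun x y => ?_, fun x y => ?_⟩
  · exact cont_aux _ (Real.continuous_cos.comp (continuous_const.mul continuous_id)).abs
      round (fun x hx => round_eventually_eq (fun h => hx (by simp [h]))) c
  · rw [F1, norm_mul, e_norm, mul_one, Complex.norm_real, Real.norm_eq_abs, abs_abs]
    exact Real.abs_cos_le_one _
  · simp only [F1]
    rw [show ((c * round x : ℤ):ℝ) * (y+1) = ((c * round x : ℤ):ℝ) * y + ((c * round x : ℤ):ℝ)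
      by ring, e_add, e_int, mul_one]
  · simp only [F1]
    rw [show x + 1 = x + ((1:ℤ):ℝ) by push_cast; ring, round_add_intCast,
      show Real.pi * (x + ((1:ℤ):ℝ)) = Real.pi * x + Real.pi by push_cast; ring,
      Real.cos_add_pi, abs_neg,
      show ((c * (round x + 1) : ℤ):ℝ) * y = ((c * round x : ℤ):ℝ) * y + (c:ℝ) * y
      by push_cast; ring, e_add]
    ring

lemma F2_mem (c : ℤ) : F2 c ∈ Mc c := by
  rw [mem_Mc_iff]
  refine ⟨?_, ⟨1, fun p => ?_⟩, fun x y => ?_, fun x y => ?_⟩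
  · exact cont_aux _ (Real.continuous_sin.comp (continuous_const.mul continuous_id)).abs
      Int.floor (fun x hx => floor_eventually_eq (fun h => hx (by simp [h]))) c
  · rw [F2, norm_mul, e_norm, mul_one, Complex.norm_real, Real.norm_eq_abs, abs_abs]
    exact Real.abs_sin_le_one _
  · simp only [F2]
    rw [show ((c * ⌊x⌋ : ℤ):ℝ) * (y+1) = ((c * ⌊x⌋ : ℤ):ℝ) * y + ((c * ⌊x⌋ : ℤ):ℝ)
      by ring, e_add, e_int, mul_one]
  · simp only [F2]
    rw [show x + 1 = x + ((1:ℤ):ℝ) by push_cast; ring, Int.floor_add_intCast,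
      show Real.pi * (x + ((1:ℤ):ℝ)) = Real.pi * x + Real.pi by push_cast; ring,
      Real.sin_add_pi, abs_neg,
      show ((c * (⌊x⌋ + 1) : ℤ):ℝ) * y = ((c * ⌊x⌋ : ℤ):ℝ) * y + (c:ℝ) * y
      by push_cast; ring, e_add]
    ring

lemma F_partition (c : ℤ) (p : ℝ × ℝ) :
    F1 c p * F1 (-c) p + F2 c p * F2 (-c) p = 1 := by
  simp only [F1, F2]
  rw [show ((-c * round p.1 : ℤ):ℝ) * p.2 = -(((c * round p.1 : ℤ):ℝ) * p.2) by push_cast; ring,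
    show ((-c * ⌊p.1⌋ : ℤ):ℝ) * p.2 = -(((c * ⌊p.1⌋ : ℤ):ℝ) * p.2) by push_cast; ring]
  have h1 := e_mul_e_neg (((c * round p.1 : ℤ):ℝ) * p.2)
  have h2 := e_mul_e_neg (((c * ⌊p.1⌋ : ℤ):ℝ) * p.2)
  have hs := Real.sin_sq_add_cos_sq (Real.pi * p.1)
  have : ((|Real.cos (Real.pi * p.1)| : ℝ):ℂ)^2 + ((|Real.sin (Real.pi * p.1)| : ℝ):ℂ)^2 = 1 := by
    have hr : |Real.cos (Real.pi * p.1)|^2 + |Real.sin (Real.pi * p.1)|^2 = (1:ℝ) := by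
      rw [sq_abs, sq_abs]; linarith
    exact_mod_cast congrArg (fun r : ℝ => (r:ℂ)) hr
  linear_combination (((|Real.cos (Real.pi * p.1)| : ℝ):ℂ))^2 * h1 + (((|Real.sin (Real.pi * p.1)| : ℝ):ℂ))^2 * h2 + this


/-- The `C(𝕋²)`-balanced relation in `M^c ⊗[ℂ] M^{c'}`:
`(φ·f) ⊗ g ∼ f ⊗ (φ·g)` for `φ ∈ C(𝕋²) = M^0`. -/
noncomputable def balanced (c c' : ℤ) : Submodule ℂ (Mc c ⊗[ℂ] Mc c') :=
  Submodule.span ℂ {z | ∃ (φ : (ℝ × ℝ) → ℂ) (_ : φ ∈ Mc 0)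
    (f f₁ : Mc c) (g g₁ : Mc c'),
      (f₁ : (ℝ × ℝ) → ℂ) = φ * (f : (ℝ × ℝ) → ℂ) ∧
      (g₁ : (ℝ × ℝ) → ℂ) = φ * (g : (ℝ × ℝ) → ℂ) ∧
      z = f₁ ⊗ₜ[ℂ] g - f ⊗ₜ[ℂ] g₁}


noncomputable def mulMap (c c' : ℤ) : Mc c →ₗ[ℂ] Mc c' →ₗ[ℂ] Mc (c + c') :=
  LinearMap.mk₂ ℂ
    (fun f g => ⟨(f : (ℝ × ℝ) → ℂ) * g, mul_mem_Mc rfl f.2 g.2⟩)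
    (fun f f' g => by
      apply Subtype.ext; show ((f : (ℝ × ℝ) → ℂ) + f') * g = _
      funext p; simp [add_mul])
    (fun a f g => by
      apply Subtype.ext; show (a • (f : (ℝ × ℝ) → ℂ)) * g = _
      funext p; simp [smul_eq_mul]; ring)
    (fun f g g' => by
      apply Subtype.ext; show (f : (ℝ × ℝ) → ℂ) * ((g : (ℝ × ℝ) → ℂ) + g') = _
      funext p; simp [mul_add])
    (fun a f g => by
      apply Subtype.ext; show (f : (ℝ × ℝ) → ℂ) * (a • (g : (ℝ × ℝ) → ℂ)) = _
      funext p; simp [smul_eq_mul]; ring)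

noncomputable def Phi (c c' : ℤ) : (Mc c ⊗[ℂ] Mc c') →ₗ[ℂ] Mc (c + c') :=
  TensorProduct.lift (mulMap c c')

lemma Phi_tmul (c c' : ℤ) (f : Mc c) (g : Mc c') :
    ((Phi c c' (f ⊗ₜ[ℂ] g) : (ℝ × ℝ) → ℂ)) = (f : (ℝ × ℝ) → ℂ) * g := rfl

noncomputable def mulBy {a b d : ℤ} (φ : (ℝ × ℝ) → ℂ) (hφ : φ ∈ Mc a) (h : a + b = d) :
    Mc b →ₗ[ℂ] Mc d where
  toFun g := ⟨φ * g, mul_mem_Mc h hφ g.2⟩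
  map_add' g g' := by
    apply Subtype.ext; show φ * ((g : (ℝ × ℝ) → ℂ) + g') = _
    funext p; simp [mul_add]
  map_smul' a g := by
    apply Subtype.ext; show φ * (a • (g : (ℝ × ℝ) → ℂ)) = _
    funext p; simp [smul_eq_mul]; ring

noncomputable def F1e (c : ℤ) : Mc c := ⟨F1 c, F1_mem c⟩
noncomputable def F2e (c : ℤ) : Mc c := ⟨F2 c, F2_mem c⟩

noncomputable def Psi (c c' : ℤ) : Mc (c + c') →ₗ[ℂ] (Mc c ⊗[ℂ] Mc c') :=
  (TensorProduct.mk ℂ (Mc c) (Mc c') (F1e c)).comp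
      (mulBy (F1 (-c)) (F1_mem (-c)) (by ring)) +
  (TensorProduct.mk ℂ (Mc c) (Mc c') (F2e c)).comp
      (mulBy (F2 (-c)) (F2_mem (-c)) (by ring))

lemma Phi_Psi (c c' : ℤ) (h : Mc (c + c')) : Phi c c' (Psi c c' h) = h := by
  apply Subtype.ext
  have : Psi c c' h = (F1e c) ⊗ₜ[ℂ] (mulBy (F1 (-c)) (F1_mem (-c)) (by ring) h) +
      (F2e c) ⊗ₜ[ℂ] (mulBy (F2 (-c)) (F2_mem (-c)) (by ring) h) := rfl
  rw [this, map_add]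
  show (F1 c) * (F1 (-c) * h) + (F2 c) * (F2 (-c) * h) = (h : (ℝ × ℝ) → ℂ)
  funext p
  have := F_partition c p
  simp only [Pi.add_apply, Pi.mul_apply]
  linear_combination (h : (ℝ × ℝ) → ℂ) p * this

lemma key_decomp (c c' : ℤ) (t : Mc c ⊗[ℂ] Mc c') :
    t - Psi c c' (Phi c c' t) ∈ balanced c c' := by
  induction t using TensorProduct.induction_on with
  | zero => simp only [map_zero, sub_zero]; exact Submodule.zero_mem _
  | tmul f g =>
      have hφ1 : (F1 (-c)) * (f : (ℝ × ℝ) → ℂ) ∈ Mc 0 :=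
        mul_mem_Mc (by ring) (F1_mem (-c)) f.2
      have hφ2 : (F2 (-c)) * (f : (ℝ × ℝ) → ℂ) ∈ Mc 0 :=
        mul_mem_Mc (by ring) (F2_mem (-c)) f.2
      set φ1 : (ℝ × ℝ) → ℂ := (F1 (-c)) * (f : (ℝ × ℝ) → ℂ) with hφ1d
      set φ2 : (ℝ × ℝ) → ℂ := (F2 (-c)) * (f : (ℝ × ℝ) → ℂ) with hφ2d
      set f1 : Mc c := ⟨φ1 * F1 c, mul_mem_Mc (by ring) hφ1 (F1_mem c)⟩ with hf1
      set f2 : Mc c := ⟨φ2 * F2 c, mul_mem_Mc (by ring) hφ2 (F2_mem c)⟩ with hf2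
      set g1 : Mc c' := ⟨φ1 * (g : (ℝ × ℝ) → ℂ), mul_mem_Mc (by ring) hφ1 g.2⟩ with hg1
      set g2 : Mc c' := ⟨φ2 * (g : (ℝ × ℝ) → ℂ), mul_mem_Mc (by ring) hφ2 g.2⟩ with hg2
      have hsum : f = f1 + f2 := by
        apply Subtype.ext
        show (f : (ℝ × ℝ) → ℂ) = φ1 * F1 c + φ2 * F2 c
        funext p
        have := F_partition c p
        simp only [Pi.add_apply, Pi.mul_apply, hφ1d, hφ2d]
        linear_combination (f : (ℝ × ℝ) → ℂ) p * this.symm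
      have hPsi : Psi c c' (Phi c c' (f ⊗ₜ[ℂ] g)) = (F1e c) ⊗ₜ[ℂ] g1 + (F2e c) ⊗ₜ[ℂ] g2 := by
        have h1 : mulBy (F1 (-c)) (F1_mem (-c)) (by ring : -c + (c + c') = c')
            (Phi c c' (f ⊗ₜ[ℂ] g)) = g1 := by
          apply Subtype.ext
          show F1 (-c) * ((f : (ℝ × ℝ) → ℂ) * g) = φ1 * (g : (ℝ × ℝ) → ℂ)
          funext p; simp only [Pi.mul_apply, hφ1d]; ring
        have h2 : mulBy (F2 (-c)) (F2_mem (-c)) (by ring : -c + (c + c') = c')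
            (Phi c c' (f ⊗ₜ[ℂ] g)) = g2 := by
          apply Subtype.ext
          show F2 (-c) * ((f : (ℝ × ℝ) → ℂ) * g) = φ2 * (g : (ℝ × ℝ) → ℂ)
          funext p; simp only [Pi.mul_apply, hφ2d]; ring
        show (F1e c) ⊗ₜ[ℂ] _ + (F2e c) ⊗ₜ[ℂ] _ = _
        rw [h1, h2]
      rw [hPsi, hsum, TensorProduct.add_tmul]
      have hz1 : f1 ⊗ₜ[ℂ] g - (F1e c) ⊗ₜ[ℂ] g1 ∈ balanced c c' := by
        apply Submodule.subset_span
        exact ⟨φ1, hφ1, F1e c, f1, g, g1, rfl, rfl, rfl⟩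
      have hz2 : f2 ⊗ₜ[ℂ] g - (F2e c) ⊗ₜ[ℂ] g2 ∈ balanced c c' := by
        apply Submodule.subset_span
        exact ⟨φ2, hφ2, F2e c, f2, g, g2, rfl, rfl, rfl⟩
      have := Submodule.add_mem _ hz1 hz2
      convert this using 1
      abel
  | add t s ht hs =>
      have := Submodule.add_mem _ ht hs
      convert this using 1
      rw [map_add, map_add]
      abel

/-- For integers `c, c'` the pointwise product `f ⊗ g ↦ fg` induces an isomorphism
of Hilbert `C(𝕋²)`-bimodules `M^c ⊗_{C(𝕋²)} M^{c'} ≅ M^{c+c'}`: there is a surjective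
linear map on `M^c ⊗[ℂ] M^{c'}` given on elementary tensors by the pointwise product,
whose kernel is exactly the `C(𝕋²)`-balanced relation, so that it descends to a
linear bijection `M^c ⊗_{C(𝕋²)} M^{c'} ≅ M^{c+c'}`. -/
theorem Mc_tensor_iso (c c' : ℤ) :
    ∃ Φ : (Mc c ⊗[ℂ] Mc c') →ₗ[ℂ] Mc (c + c'),
      Function.Surjective Φ ∧ LinearMap.ker Φ = balanced c c' ∧
      ∀ (f : Mc c) (g : Mc c'),
        ((Φ (f ⊗ₜ[ℂ] g) : (ℝ × ℝ) → ℂ)) =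
          fun p => (f : (ℝ × ℝ) → ℂ) p * (g : (ℝ × ℝ) → ℂ) p := by
  refine ⟨Phi c c', ?_, ?_, ?_⟩
  · intro h
    exact ⟨Psi c c' h, Phi_Psi c c' h⟩
  · apply le_antisymm
    · intro t ht
      rw [LinearMap.mem_ker] at ht
      have := key_decomp c c' t
      rw [ht, map_zero] at this
      exact (sub_zero t : t - 0 = t) ▸ this
    · rw [balanced, Submodule.span_le]
      rintro z ⟨φ, hφ, f, f₁, g, g₁, hf₁, hg₁, rfl⟩
      simp only [SetLike.mem_coe, LinearMap.mem_ker, map_sub]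
      apply sub_eq_zero_of_eq
      apply Subtype.ext
      rw [Phi_tmul, Phi_tmul, hf₁, hg₁]
      funext p
      simp only [Pi.mul_apply]
      ring
  · intro f g
    rw [Phi_tmul]
    rfl
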